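/- Let q(x) = ½xᵀQx + cᵀx + α with Q ∈ ℝⁿˣⁿ symmetric, and let P = {x ∈ ℝⁿ : Ax ≥ b} be a polyhedron. For x̄ ∈ P the following are equivalent: (i) x̄ is a local minimizer of q on P; (ii) x̄ is a stationary point of q on P and vᵀQv ≥ 0 for every v ∈ T(x̄;P) with ∇q(x̄)ᵀv = 0 (i.e., Q is copositive on the critical cone C(x̄;q;P)). -/

import Mathlib

open Filter Topology Set

noncomputable section

/-- Euclidean norm on `Fin n → ℝ`. -/
def n2 {n : ℕ} (v : Fin n → ℝ) : ℝ := Real.sqrt (∑ i, v i ^ 2)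

/-- The tangent cone of `S` at `x`: `v ∈ T(x;S)` iff there are `xᵏ ∈ S → x` and `τ_k ↓ 0`
with `(xᵏ − x)/τ_k → v`. -/
def TangentCone {n : ℕ} (S : Set (Fin n → ℝ)) (x : Fin n → ℝ) : Set (Fin n → ℝ) :=
  {v | ∃ (xs : ℕ → Fin n → ℝ) (τ : ℕ → ℝ),
    (∀ k, xs k ∈ S) ∧ Tendsto xs atTop (𝓝 x) ∧
    (∀ k, 0 < τ k) ∧ Tendsto τ atTop (𝓝 (0:ℝ)) ∧
    Tendsto (fun k => (τ k)⁻¹ • (xs k - x)) atTop (𝓝 v)}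

/-- `xbar ∈ X` is a local minimizer of `f` on `X`. -/
def IsLocMin' {n : ℕ} (f : (Fin n → ℝ) → ℝ) (X : Set (Fin n → ℝ)) (xbar : Fin n → ℝ) : Prop :=
  xbar ∈ X ∧ ∃ ε > (0:ℝ), ∀ y ∈ X, n2 (y - xbar) < ε → f xbar ≤ f y

/-- The quadratic function `q(x) = ½ xᵀQx + cᵀx + α`. -/
def quadF {n : ℕ} (Q : Matrix (Fin n) (Fin n) ℝ) (c : Fin n → ℝ) (α : ℝ)
    (x : Fin n → ℝ) : ℝ :=
  (1/2) * (∑ i, ∑ j, Q i j * x i * x j) + (∑ i, c i * x i) + α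

/-- The gradient `∇q(x) = Qx + c` of the quadratic `q` (for symmetric `Q`). -/
def gradQ {n : ℕ} (Q : Matrix (Fin n) (Fin n) ℝ) (c : Fin n → ℝ) (x : Fin n → ℝ) :
    Fin n → ℝ :=
  fun i => (∑ j, Q i j * x j) + c i

namespace QPaux

def dotp {n : ℕ} (a u : Fin n → ℝ) : ℝ := ∑ i, a i * u i

def qf {n : ℕ} (Q : Matrix (Fin n) (Fin n) ℝ) (v : Fin n → ℝ) : ℝ :=
  ∑ i, ∑ j, Q i j * v i * v j

def bil {n : ℕ} (Q : Matrix (Fin n) (Fin n) ℝ) (v w : Fin n → ℝ) : ℝ :=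
  ∑ i, ∑ j, Q i j * v i * w j

variable {n : ℕ}

lemma dotp_add_right (a u v : Fin n → ℝ) : dotp a (u + v) = dotp a u + dotp a v := by
  simp [dotp, mul_add, Finset.sum_add_distrib]

lemma dotp_smul_right (a : Fin n → ℝ) (t : ℝ) (u : Fin n → ℝ) :
    dotp a (t • u) = t * dotp a u := by
  simp only [dotp, Pi.smul_apply, smul_eq_mul, Finset.mul_sum]
  apply Finset.sum_congr rfl; intro i _; ring

lemma dotp_sum_right {ι : Type*} (a : Fin n → ℝ) (s : Finset ι) (f : ι → Fin n → ℝ) :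
    dotp a (∑ w ∈ s, f w) = ∑ w ∈ s, dotp a (f w) := by
  simp [dotp, Finset.sum_apply, Finset.mul_sum]
  exact Finset.sum_comm

-- norm lemmas
lemma n2_eq (v : Fin n → ℝ) : n2 v = ‖(WithLp.toLp 2 v : EuclideanSpace ℝ (Fin n))‖ := by
  rw [EuclideanSpace.norm_eq]; simp [n2, Real.norm_eq_abs, sq_abs]

lemma n2_nonneg (v : Fin n → ℝ) : 0 ≤ n2 v := Real.sqrt_nonneg _

lemma n2_add_le (u v : Fin n → ℝ) : n2 (u + v) ≤ n2 u + n2 v := by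
  simp only [n2_eq, WithLp.toLp_add]; exact norm_add_le _ _

lemma n2_smul (t : ℝ) (v : Fin n → ℝ) : n2 (t • v) = |t| * n2 v := by
  simp only [n2_eq, WithLp.toLp_smul]
  rw [show |t| = ‖t‖ from rfl]; exact norm_smul t _

lemma n2_sum_le {ι : Type*} (s : Finset ι) (f : ι → Fin n → ℝ) :
    n2 (∑ i ∈ s, f i) ≤ ∑ i ∈ s, n2 (f i) := by
  simp only [n2_eq, WithLp.toLp_sum]; exact norm_sum_le _ _

lemma abs_apply_le_n2 (v : Fin n → ℝ) (i : Fin n) : |v i| ≤ n2 v := by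
  rw [show |v i| = Real.sqrt ((v i)^2) by rw [Real.sqrt_sq_eq_abs]]
  apply Real.sqrt_le_sqrt
  exact Finset.single_le_sum (f := fun j => v j ^ 2) (fun j _ => sq_nonneg _) (Finset.mem_univ i)

lemma abs_dotp_le (a v : Fin n → ℝ) : |dotp a v| ≤ (∑ i, |a i|) * n2 v := by
  calc |dotp a v| ≤ ∑ i, |a i * v i| := Finset.abs_sum_le_sum_abs _ _
    _ ≤ ∑ i, |a i| * n2 v := by
        apply Finset.sum_le_sum; intro i _
        rw [abs_mul]
        exact mul_le_mul_of_nonneg_left (abs_apply_le_n2 v i) (abs_nonneg _)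
    _ = (∑ i, |a i|) * n2 v := by rw [Finset.sum_mul]

lemma abs_bil_le (Q : Matrix (Fin n) (Fin n) ℝ) (v w : Fin n → ℝ) :
    |bil Q v w| ≤ (∑ i, ∑ j, |Q i j|) * n2 v * n2 w := by
  calc |bil Q v w| ≤ ∑ i, |∑ j, Q i j * v i * w j| := Finset.abs_sum_le_sum_abs _ _
    _ ≤ ∑ i, ∑ j, |Q i j * v i * w j| :=
        Finset.sum_le_sum (fun i _ => Finset.abs_sum_le_sum_abs _ _)
    _ ≤ ∑ i, ∑ j, |Q i j| * n2 v * n2 w := by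
        apply Finset.sum_le_sum; intro i _; apply Finset.sum_le_sum; intro j _
        rw [abs_mul, abs_mul]
        have h1 : |Q i j| * |v i| ≤ |Q i j| * n2 v :=
          mul_le_mul_of_nonneg_left (abs_apply_le_n2 v i) (abs_nonneg _)
        have := mul_le_mul h1 (abs_apply_le_n2 w j) (abs_nonneg _)
          (mul_nonneg (abs_nonneg _) (n2_nonneg _))
        linarith
    _ = (∑ i, ∑ j, |Q i j|) * n2 v * n2 w := by
        rw [Finset.sum_mul, Finset.sum_mul]; congr 1; ext i; rw [Finset.sum_mul, Finset.sum_mul]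

lemma qf_expand (Q : Matrix (Fin n) (Fin n) ℝ) (u v : Fin n → ℝ) :
    qf Q (u + v) = qf Q u + bil Q u v + bil Q v u + qf Q v := by
  simp only [qf, bil, Pi.add_apply, ← Finset.sum_add_distrib]
  congr 1; ext i; congr 1; ext j; ring

lemma quad_expand (Q : Matrix (Fin n) (Fin n) ℝ) (hQ : ∀ i j, Q i j = Q j i)
    (c : Fin n → ℝ) (α : ℝ) (x d : Fin n → ℝ) :
    quadF Q c α (x + d) = quadF Q c α x + dotp (gradQ Q c x) d + (1/2) * qf Q d := by
  have hswap : ∑ i, ∑ j, Q i j * d i * x j = ∑ i, ∑ j, Q i j * x i * d j := by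
    rw [Finset.sum_comm]
    apply Finset.sum_congr rfl; intro i _
    apply Finset.sum_congr rfl; intro j _
    rw [hQ j i]; ring
  simp only [quadF, dotp, gradQ, qf, Pi.add_apply]
  have h1 : ∑ i, ∑ j, Q i j * (x i + d i) * (x j + d j)
      = (∑ i, ∑ j, Q i j * x i * x j) + (∑ i, ∑ j, Q i j * x i * d j)
        + (∑ i, ∑ j, Q i j * d i * x j) + ∑ i, ∑ j, Q i j * d i * d j := by
    simp only [← Finset.sum_add_distrib]
    congr 1; ext i; congr 1; ext j; ring
  have h2 : ∑ i, c i * (x i + d i) = (∑ i, c i * x i) + ∑ i, c i * d i := by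
    simp [mul_add, Finset.sum_add_distrib]
  have h3 : ∑ i, ((∑ j, Q i j * x j) + c i) * d i
      = (∑ i, ∑ j, Q i j * x i * d j) + ∑ i, c i * d i := by
    rw [← hswap]
    simp only [add_mul, Finset.sum_add_distrib, Finset.sum_mul]
    congr 1
    · congr 1; ext i; congr 1; ext j; ring
  rw [h1, h2, h3, hswap]
  ring

def coneOf (G : Finset (Fin n → ℝ)) : Set (Fin n → ℝ) :=
  {u | ∃ lam : (Fin n → ℝ) → ℝ, (∀ v, 0 ≤ lam v) ∧ u = ∑ w ∈ G, lam w • w}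

lemma coneOf_zero (G : Finset (Fin n → ℝ)) : (0 : Fin n → ℝ) ∈ coneOf G :=
  ⟨fun _ => 0, fun _ => le_refl _, by simp⟩

lemma coneOf_add {G : Finset (Fin n → ℝ)} {u v : Fin n → ℝ}
    (hu : u ∈ coneOf G) (hv : v ∈ coneOf G) : u + v ∈ coneOf G := by
  obtain ⟨lu, hlu, hu⟩ := hu
  obtain ⟨lv, hlv, hv⟩ := hv
  exact ⟨fun w => lu w + lv w, fun w => add_nonneg (hlu w) (hlv w), by
    rw [hu, hv, ← Finset.sum_add_distrib]
    apply Finset.sum_congr rfl; intro w _; rw [add_smul]⟩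

lemma coneOf_smul {G : Finset (Fin n → ℝ)} {u : Fin n → ℝ} {t : ℝ}
    (ht : 0 ≤ t) (hu : u ∈ coneOf G) : t • u ∈ coneOf G := by
  obtain ⟨lu, hlu, hu⟩ := hu
  refine ⟨fun w => t * lu w, fun w => mul_nonneg ht (hlu w), ?_⟩
  rw [hu, Finset.smul_sum]
  apply Finset.sum_congr rfl; intro w _; rw [smul_smul]

lemma mem_coneOf_self {G : Finset (Fin n → ℝ)} {w : Fin n → ℝ} (hw : w ∈ G) :
    w ∈ coneOf G := by
  refine ⟨fun v => if v = w then 1 else 0, fun v => by positivity, ?_⟩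
  rw [Finset.sum_congr rfl (fun v _ => by
    show (if v = w then (1:ℝ) else 0) • v = if v = w then w else 0
    split_ifs with h <;> simp [h]), Finset.sum_ite_eq' G w (fun _ => w)]
  simp [hw]

lemma coneOf_add_gen {G : Finset (Fin n → ℝ)} {u z : Fin n → ℝ} {β : ℝ}
    (hu : u ∈ coneOf G) (hz : z ∈ G) (hβ : 0 ≤ β) : u + β • z ∈ coneOf G :=
  coneOf_add hu (coneOf_smul hβ (mem_coneOf_self hz))

lemma coneOf_subset_rep {s G : Finset (Fin n → ℝ)} (hsub : s ⊆ G)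
    (lam : (Fin n → ℝ) → ℝ) (hlam : ∀ w ∈ s, 0 ≤ lam w) :
    (∑ w ∈ s, lam w • w) ∈ coneOf G := by
  refine ⟨fun v => if v ∈ s then lam v else 0, fun v => ?_, ?_⟩
  · dsimp only; split_ifs with h
    · exact hlam v h
    · exact le_rfl
  · dsimp only
    rw [← Finset.sum_subset hsub (fun x _ hx => by simp [hx])]
    apply Finset.sum_congr rfl; intro w hw; simp [hw]

lemma coneOf_combo {G : Finset (Fin n → ℝ)} {ι : Type*} (s : Finset ι)
    (f : ι → Fin n → ℝ) (coef : ι → ℝ) (hf : ∀ w ∈ s, f w ∈ coneOf G)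
    (hc : ∀ w ∈ s, 0 ≤ coef w) : (∑ w ∈ s, coef w • f w) ∈ coneOf G := by
  classical
  induction s using Finset.induction_on with
  | empty => simpa using coneOf_zero G
  | insert a s hnot ih =>
      rw [Finset.sum_insert hnot]
      exact coneOf_add (coneOf_smul (hc a (Finset.mem_insert_self a s))
          (hf a (Finset.mem_insert_self a s)))
        (ih (fun w hw => hf w (Finset.mem_insert_of_mem hw))
          (fun w hw => hc w (Finset.mem_insert_of_mem hw)))


lemma elim_nobad {a : Fin n → ℝ} {G G' : Finset (Fin n → ℝ)}
    (hpos : ∀ w ∈ G, 0 ≤ dotp a w → w ∈ G')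
    (lam : (Fin n → ℝ) → ℝ) (hnn : ∀ v, 0 ≤ lam v)
    (hno : ∀ w ∈ G, lam w ≠ 0 → 0 ≤ dotp a w) :
    (∑ w ∈ G, lam w • w) ∈ coneOf G' := by
  classical
  have hsum : ∑ w ∈ G.filter (fun w => lam w ≠ 0), lam w • w = ∑ w ∈ G, lam w • w :=
    Finset.sum_filter_of_ne (fun x _ hx => by
      intro h; apply hx; rw [h, zero_smul])
  rw [← hsum]
  apply coneOf_subset_rep
  · intro w hw
    rw [Finset.mem_filter] at hw
    exact hpos w hw.1 (hno w hw.1 hw.2)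
  · intro w _; exact hnn w

lemma dotp_conesum (a : Fin n → ℝ) (G : Finset (Fin n → ℝ)) (lam : (Fin n → ℝ) → ℝ) :
    dotp a (∑ w ∈ G, lam w • w) = ∑ w ∈ G, lam w * dotp a w := by
  rw [dotp_sum_right]
  exact Finset.sum_congr rfl (fun w _ => dotp_smul_right a (lam w) w)

lemma elim_main {a : Fin n → ℝ} {G G' : Finset (Fin n → ℝ)}
    (hpos : ∀ w ∈ G, 0 ≤ dotp a w → w ∈ G')
    (hcomb : ∀ w1 ∈ G, ∀ w2 ∈ G, 0 < dotp a w1 → dotp a w2 < 0 →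
      dotp a w1 • w2 + (-(dotp a w2)) • w1 ∈ G') :
    ∀ (N : ℕ) (lam : (Fin n → ℝ) → ℝ),
      (G.filter (fun w => lam w ≠ 0 ∧ dotp a w ≠ 0)).card ≤ N →
      (∀ v, 0 ≤ lam v) → 0 ≤ dotp a (∑ w ∈ G, lam w • w) →
      (∑ w ∈ G, lam w • w) ∈ coneOf G' := by
  classical
  intro N
  induction N with
  | zero =>
      intro lam hcard hnn _
      apply elim_nobad hpos lam hnn
      intro w hw hlw
      by_contra hneg
      push_neg at hneg
      have : w ∈ G.filter (fun w => lam w ≠ 0 ∧ dotp a w ≠ 0) :=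
        Finset.mem_filter.2 ⟨hw, hlw, ne_of_lt hneg⟩
      have := Finset.card_pos.2 ⟨w, this⟩
      omega
  | succ N ih =>
      intro lam hcard hnn hau
      by_cases hbad : ∃ l ∈ G, lam l ≠ 0 ∧ dotp a l < 0
      · obtain ⟨l, hlG, hll, hal⟩ := hbad
        have hllpos : 0 < lam l := lt_of_le_of_ne (hnn l) (Ne.symm hll)
        -- find a good index j
        have hgood : ∃ j ∈ G, lam j ≠ 0 ∧ 0 < dotp a j := by
          by_contra hno
          push_neg at hno
          have hlt : ∑ w ∈ G, lam w * dotp a w < ∑ w ∈ G, (0:ℝ) := by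
            apply Finset.sum_lt_sum
            · intro w hw
              by_cases h0 : lam w = 0
              · rw [h0, zero_mul]
              · exact mul_nonpos_of_nonneg_of_nonpos (hnn w) (hno w hw h0)
            · exact ⟨l, hlG, mul_neg_of_pos_of_neg hllpos hal⟩
          rw [Finset.sum_const, smul_zero] at hlt
          rw [dotp_conesum] at hau
          linarith
        obtain ⟨j, hjG, hlj, haj⟩ := hgood
        have hjlpos : 0 < lam j := lt_of_le_of_ne (hnn j) (Ne.symm hlj)
        have hjl : j ≠ l := by
          intro h; rw [h] at haj; linarith
        set αj := dotp a j with hαj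
        set αl := dotp a l with hαl
        have hz : αj • l + (-αl) • j ∈ G' := hcomb j hjG l hlG haj hal
        set z : Fin n → ℝ := αj • l + (-αl) • j with hzdef
        have hdaz : dotp a z = 0 := by
          rw [hzdef, dotp_add_right, dotp_smul_right, dotp_smul_right, ← hαj, ← hαl]; ring
        by_cases hcase : lam l * (-αl) ≤ lam j * αj
        -- Case A : kill l
        · set cjl := lam l * (-αl) / αj with hcjl
          set β := lam l / αj with hβ
          have hβnn : 0 ≤ β := le_of_lt (div_pos hllpos haj)
          have hcjlnn : 0 ≤ cjl := by
            apply div_nonneg _ (le_of_lt haj)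
            exact mul_nonneg (le_of_lt hllpos) (by linarith)
          set lam' := Function.update (Function.update lam l 0) j (lam j - cjl) with hlam'
          have hlam'l : lam' l = 0 := by
            rw [hlam', Function.update_of_ne (Ne.symm hjl), Function.update_self]
          have hlam'j : lam' j = lam j - cjl := by
            rw [hlam', Function.update_self]
          have hlam'other : ∀ w, w ≠ l → w ≠ j → lam' w = lam w := by
            intro w hwl hwj
            rw [hlam', Function.update_of_ne hwj, Function.update_of_ne hwl]
          have hnn' : ∀ v, 0 ≤ lam' v := by
            intro v
            by_cases hvl : v = l
            · rw [hvl, hlam'l]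
            · by_cases hvj : v = j
              · rw [hvj, hlam'j]
                rw [sub_nonneg, hcjl, div_le_iff₀ haj]
                linarith [hcase, mul_pos hjlpos haj]
              · rw [hlam'other v hvl hvj]; exact hnn v
          -- sum identity
          have hsum : ∑ w ∈ G, lam w • w = (∑ w ∈ G, lam' w • w) + β • z := by
            have hptwise : ∀ w ∈ G, lam w • w =
                lam' w • w + ((if w = l then lam l • l else 0) +
                  (if w = j then cjl • j else 0)) := by
              intro w _
              by_cases hwl : w = l
              · subst hwl
                rw [hlam'l, if_pos rfl, if_neg (by exact fun h => hjl h.symm)]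
                simp
              · by_cases hwj : w = j
                · subst hwj
                  rw [hlam'j, if_neg hwl, if_pos rfl, sub_smul]
                  module
                · rw [hlam'other w hwl hwj, if_neg hwl, if_neg hwj]
                  simp
            rw [Finset.sum_congr rfl hptwise, Finset.sum_add_distrib,
              Finset.sum_add_distrib, Finset.sum_ite_eq' G l (fun _ => lam l • l),
              Finset.sum_ite_eq' G j (fun _ => cjl • j), if_pos hlG, if_pos hjG]
            have hβz : β • z = lam l • l + cjl • j := by
              rw [hzdef, smul_add, smul_smul, smul_smul, hβ, hcjl]
              congr 1
              · congr 1; exact div_mul_cancel₀ _ (ne_of_gt haj)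
              · congr 1; ring
            rw [hβz]
            try abel
          have hcard' : (G.filter (fun w => lam' w ≠ 0 ∧ dotp a w ≠ 0)).card ≤ N := by
            have hsubs : G.filter (fun w => lam' w ≠ 0 ∧ dotp a w ≠ 0) ⊆
                (G.filter (fun w => lam w ≠ 0 ∧ dotp a w ≠ 0)).erase l := by
              intro w hw
              rw [Finset.mem_filter] at hw
              have hwl : w ≠ l := by
                intro h; rw [h, hlam'l] at hw; exact hw.2.1 rfl
              apply Finset.mem_erase.2
              refine ⟨hwl, Finset.mem_filter.2 ⟨hw.1, ?_, hw.2.2⟩⟩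
              by_cases hwj : w = j
              · rw [hwj]; exact hlj
              · rw [← hlam'other w hwl hwj]; exact hw.2.1
            have hlmem : l ∈ G.filter (fun w => lam w ≠ 0 ∧ dotp a w ≠ 0) :=
              Finset.mem_filter.2 ⟨hlG, hll, ne_of_lt hal⟩
            calc (G.filter (fun w => lam' w ≠ 0 ∧ dotp a w ≠ 0)).card
                ≤ ((G.filter (fun w => lam w ≠ 0 ∧ dotp a w ≠ 0)).erase l).card :=
                  Finset.card_le_card hsubs
              _ = (G.filter (fun w => lam w ≠ 0 ∧ dotp a w ≠ 0)).card - 1 :=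
                  Finset.card_erase_of_mem hlmem
              _ ≤ N := by omega
          have hau' : 0 ≤ dotp a (∑ w ∈ G, lam' w • w) := by
            have : dotp a (∑ w ∈ G, lam w • w) =
                dotp a (∑ w ∈ G, lam' w • w) + β * dotp a z := by
              rw [hsum, dotp_add_right, dotp_smul_right]
            rw [this, hdaz, mul_zero, add_zero] at hau
            exact hau
          rw [hsum]
          exact coneOf_add_gen (ih lam' hcard' hnn' hau') hz hβnn
        -- Case B : kill j
        · push_neg at hcase
          set clj := lam j * αj / (-αl) with hclj
          set β := lam j / (-αl) with hβ
          have hnαl : 0 < -αl := by linarith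
          have hβnn : 0 ≤ β := le_of_lt (div_pos hjlpos hnαl)
          have hcljnn : 0 ≤ clj := by
            apply div_nonneg _ (le_of_lt hnαl)
            exact mul_nonneg (le_of_lt hjlpos) (le_of_lt haj)
          set lam' := Function.update (Function.update lam j 0) l (lam l - clj) with hlam'
          have hlam'j : lam' j = 0 := by
            rw [hlam', Function.update_of_ne hjl, Function.update_self]
          have hlam'l : lam' l = lam l - clj := by
            rw [hlam', Function.update_self]
          have hlam'other : ∀ w, w ≠ l → w ≠ j → lam' w = lam w := by
            intro w hwl hwj
            rw [hlam', Function.update_of_ne hwl, Function.update_of_ne hwj]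
          have hnn' : ∀ v, 0 ≤ lam' v := by
            intro v
            by_cases hvj : v = j
            · rw [hvj, hlam'j]
            · by_cases hvl : v = l
              · rw [hvl, hlam'l]
                rw [sub_nonneg, hclj, div_le_iff₀ hnαl]
                linarith [hcase]
              · rw [hlam'other v hvl hvj]; exact hnn v
          have hsum : ∑ w ∈ G, lam w • w = (∑ w ∈ G, lam' w • w) + β • z := by
            have hptwise : ∀ w ∈ G, lam w • w =
                lam' w • w + ((if w = j then lam j • j else 0) +
                  (if w = l then clj • l else 0)) := by
              intro w _
              by_cases hwj : w = j
              · subst hwj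
                rw [hlam'j, if_pos rfl, if_neg hjl]
                simp
              · by_cases hwl : w = l
                · subst hwl
                  rw [hlam'l, if_neg hwj, if_pos rfl, sub_smul]
                  module
                · rw [hlam'other w hwl hwj, if_neg hwj, if_neg hwl]
                  simp
            rw [Finset.sum_congr rfl hptwise, Finset.sum_add_distrib,
              Finset.sum_add_distrib, Finset.sum_ite_eq' G j (fun _ => lam j • j),
              Finset.sum_ite_eq' G l (fun _ => clj • l), if_pos hlG, if_pos hjG]
            have hβz : β • z = clj • l + lam j • j := by
              rw [hzdef, smul_add, smul_smul, smul_smul, hβ, hclj]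
              congr 1
              · congr 1; ring
              · congr 1; exact div_mul_cancel₀ _ (ne_of_gt hnαl)
            rw [hβz]
            try abel
          have hcard' : (G.filter (fun w => lam' w ≠ 0 ∧ dotp a w ≠ 0)).card ≤ N := by
            have hsubs : G.filter (fun w => lam' w ≠ 0 ∧ dotp a w ≠ 0) ⊆
                (G.filter (fun w => lam w ≠ 0 ∧ dotp a w ≠ 0)).erase j := by
              intro w hw
              rw [Finset.mem_filter] at hw
              have hwj : w ≠ j := by
                intro h; rw [h, hlam'j] at hw; exact hw.2.1 rfl
              apply Finset.mem_erase.2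
              refine ⟨hwj, Finset.mem_filter.2 ⟨hw.1, ?_, hw.2.2⟩⟩
              by_cases hwl : w = l
              · rw [hwl]; exact hll
              · rw [← hlam'other w hwl hwj]; exact hw.2.1
            have hjmem : j ∈ G.filter (fun w => lam w ≠ 0 ∧ dotp a w ≠ 0) :=
              Finset.mem_filter.2 ⟨hjG, hlj, ne_of_gt haj⟩
            calc (G.filter (fun w => lam' w ≠ 0 ∧ dotp a w ≠ 0)).card
                ≤ ((G.filter (fun w => lam w ≠ 0 ∧ dotp a w ≠ 0)).erase j).card :=
                  Finset.card_le_card hsubs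
              _ = (G.filter (fun w => lam w ≠ 0 ∧ dotp a w ≠ 0)).card - 1 :=
                  Finset.card_erase_of_mem hjmem
              _ ≤ N := by omega
          have hau' : 0 ≤ dotp a (∑ w ∈ G, lam' w • w) := by
            have : dotp a (∑ w ∈ G, lam w • w) =
                dotp a (∑ w ∈ G, lam' w • w) + β * dotp a z := by
              rw [hsum, dotp_add_right, dotp_smul_right]
            rw [this, hdaz, mul_zero, add_zero] at hau
            exact hau
          rw [hsum]
          exact coneOf_add_gen (ih lam' hcard' hnn' hau') hz hβnn
      · push_neg at hbad
        exact elim_nobad hpos lam hnn hbad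


lemma mem_coneOf_family {ι : Type} [Fintype ι] {G : Finset (Fin n → ℝ)}
    (gen : ι → Fin n → ℝ) (hgen : ∀ p, gen p ∈ G) (coef : ι → ℝ) (hc : ∀ p, 0 ≤ coef p) :
    (∑ p, coef p • gen p) ∈ coneOf G := by
  classical
  refine ⟨fun v => ∑ p, if v = gen p then coef p else 0, fun v => ?_, ?_⟩
  · apply Finset.sum_nonneg; intro p _
    split_ifs
    · exact hc p
    · exact le_rfl
  · calc ∑ p, coef p • gen p
        = ∑ p, ∑ w ∈ G, (if w = gen p then coef p • gen p else 0) := by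
          apply Finset.sum_congr rfl; intro p _
          rw [Finset.sum_ite_eq' G (gen p) (fun _ => coef p • gen p), if_pos (hgen p)]
      _ = ∑ w ∈ G, ∑ p, (if w = gen p then coef p • gen p else 0) := Finset.sum_comm
      _ = ∑ w ∈ G, (fun v => ∑ p, if v = gen p then coef p else 0) w • w := by
          apply Finset.sum_congr rfl; intro w _
          dsimp only
          rw [Finset.sum_smul]
          apply Finset.sum_congr rfl; intro p _
          split_ifs with h
          · rw [h]
          · rw [zero_smul]

/-- Minkowski–Weyl: a polyhedral cone is finitely generated. -/
theorem weyl (L : List (Fin n → ℝ)) :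
    ∃ G : Finset (Fin n → ℝ), ∀ u, (∀ a ∈ L, 0 ≤ dotp a u) ↔ u ∈ coneOf G := by
  classical
  induction L with
  | nil =>
      refine ⟨(Finset.univ : Finset (Fin n × Bool)).image
        (fun p => Pi.single p.1 (if p.2 then (1:ℝ) else -1)), fun u => ?_⟩
      simp only [List.not_mem_nil, IsEmpty.forall_iff, forall_const, true_iff]
      have hu : u = ∑ p : Fin n × Bool,
          (if p.2 then max (u p.1) 0 else max (-u p.1) 0) •
            (Pi.single p.1 (if p.2 then (1:ℝ) else -1) : Fin n → ℝ) := by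
        funext i
        rw [Finset.sum_apply, Fintype.sum_prod_type]
        have hinner : ∀ j : Fin n, (∑ b : Bool, ((if b then max (u j) 0 else max (-u j) 0) •
            (Pi.single j (if b then (1:ℝ) else -1) : Fin n → ℝ)) i)
            = if i = j then max (u j) 0 - max (-u j) 0 else 0 := by
          intro j
          rw [Fintype.sum_bool]
          simp only [if_true, if_false, Pi.smul_apply, Pi.single_apply, smul_eq_mul]
          by_cases h : i = j
          · simp [h]
            exact max_zero_sub_max_neg_zero_eq_self _
          · simp [h]
        rw [show ∑ j : Fin n, ∑ b : Bool, ((if b then max (u j) 0 else max (-u j) 0) •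
            (Pi.single j (if b then (1:ℝ) else -1) : Fin n → ℝ)) i
            = ∑ j : Fin n, if i = j then max (u j) 0 - max (-u j) 0 else 0 from
          Finset.sum_congr rfl (fun j _ => by rw [← hinner j]),
          Finset.sum_ite_eq Finset.univ i
          (fun j => max (u j) 0 - max (-u j) 0), if_pos (Finset.mem_univ i)]
        rcases le_total (u i) 0 with h | h
        · rw [max_eq_right h, max_eq_left (by linarith)]; ring
        · rw [max_eq_left h, max_eq_right (by linarith)]; ring
      rw [hu]
      apply mem_coneOf_family
      · intro p; exact Finset.mem_image_of_mem _ (Finset.mem_univ p)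
      · intro p
        split_ifs
        · exact le_max_right _ _
        · exact le_max_right _ _
  | cons a tl ih =>
      obtain ⟨G, hG⟩ := ih
      set Gpos := G.filter (fun w => 0 ≤ dotp a w) with hGpos
      set Gcomb := ((G ×ˢ G).filter (fun p => 0 < dotp a p.1 ∧ dotp a p.2 < 0)).image
        (fun p => dotp a p.1 • p.2 + (-(dotp a p.2)) • p.1) with hGcomb
      refine ⟨Gpos ∪ Gcomb, fun u => ?_⟩
      have hGen : ∀ z ∈ Gpos ∪ Gcomb, 0 ≤ dotp a z ∧ z ∈ coneOf G := by
        intro z hz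
        rcases Finset.mem_union.1 hz with hz | hz
        · rw [hGpos, Finset.mem_filter] at hz
          exact ⟨hz.2, mem_coneOf_self hz.1⟩
        · rw [hGcomb] at hz
          obtain ⟨p, hp, rfl⟩ := Finset.mem_image.1 hz
          rw [Finset.mem_filter, Finset.mem_product] at hp
          constructor
          · rw [dotp_add_right, dotp_smul_right, dotp_smul_right]
            have h0 : dotp a p.1 * dotp a p.2 + -dotp a p.2 * dotp a p.1 = 0 := by ring
            linarith
          · exact coneOf_add (coneOf_smul (le_of_lt hp.2.1) (mem_coneOf_self hp.1.2))
              (coneOf_smul (by linarith [hp.2.2]) (mem_coneOf_self hp.1.1))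
      constructor
      · -- constraints → cone
        intro hcons
        have hau : 0 ≤ dotp a u := hcons a List.mem_cons_self
        have huG : u ∈ coneOf G := (hG u).1 (fun b hb => hcons b (List.mem_cons_of_mem a hb))
        obtain ⟨lam, hnn, hrep⟩ := huG
        rw [hrep]
        apply elim_main (G' := Gpos ∪ Gcomb)
          (a := a)
          (fun w hw hwpos => Finset.mem_union_left _
            (Finset.mem_filter.2 ⟨hw, hwpos⟩))
          (fun w1 hw1 w2 hw2 h1 h2 => Finset.mem_union_right _
            (Finset.mem_image.2 ⟨(w1, w2),
              Finset.mem_filter.2 ⟨Finset.mem_product.2 ⟨hw1, hw2⟩, h1, h2⟩, rfl⟩))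
          (G.filter (fun w => lam w ≠ 0 ∧ dotp a w ≠ 0)).card lam (le_refl _) hnn
          (by rw [← hrep]; exact hau)
      · -- cone → constraints
        intro hu
        obtain ⟨lam, hnn, hrep⟩ := hu
        have hau : 0 ≤ dotp a u := by
          rw [hrep, dotp_conesum]
          apply Finset.sum_nonneg
          intro w hw
          exact mul_nonneg (hnn w) (hGen w hw).1
        have huG : u ∈ coneOf G := by
          rw [hrep]
          exact coneOf_combo _ _ _ (fun w hw => (hGen w hw).2) (fun w _ => hnn w)
        intro b hb
        rcases List.mem_cons.1 hb with rfl | hb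
        · exact hau
        · exact ((hG u).2 huG) b hb


lemma n2_sub_le (u v : Fin n → ℝ) : n2 (u - v) ≤ n2 u + n2 v := by
  have : u - v = u + (-1 : ℝ) • v := by funext i; simp; ring
  rw [this]
  refine le_trans (n2_add_le u _) ?_
  rw [n2_smul]
  simp

/-- Key error-bound lemma: if `g` is nonnegative on the polyhedral cone `K(L)` and `Q` is
copositive on `K(L) ∩ g^⊥`, then `qf Q u ≥ -γ ⟨g,u⟩ ‖u‖` on `K(L)`. -/
lemma key_lemma (L : List (Fin n → ℝ)) (g : Fin n → ℝ) (Q : Matrix (Fin n) (Fin n) ℝ)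
    (hg : ∀ u, (∀ a ∈ L, 0 ≤ dotp a u) → 0 ≤ dotp g u)
    (hcop : ∀ u, (∀ a ∈ L, 0 ≤ dotp a u) → dotp g u = 0 → 0 ≤ qf Q u) :
    ∃ γ : ℝ, 0 ≤ γ ∧ ∀ u, (∀ a ∈ L, 0 ≤ dotp a u) →
      -(γ * dotp g u * n2 u) ≤ qf Q u := by
  classical
  obtain ⟨G, hG⟩ := weyl L
  have hW : ∀ w ∈ G, ∀ a ∈ L, 0 ≤ dotp a w := fun w hw => (hG w).2 (mem_coneOf_self hw)
  set O := G.filter (fun w => ¬ dotp g w = 0) with hO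
  set μ : ℝ := if h : O.Nonempty then O.inf' h (fun w => dotp g w) else 1 with hμdef
  have hμpos : 0 < μ := by
    rw [hμdef]
    split_ifs with h
    · rw [Finset.lt_inf'_iff]
      intro w hw
      rw [hO, Finset.mem_filter] at hw
      exact lt_of_le_of_ne (hg w (hW w hw.1)) (Ne.symm hw.2)
    · norm_num
  have hμle : ∀ w ∈ O, μ ≤ dotp g w := by
    intro w hw
    rw [hμdef]
    rw [dif_pos ⟨w, hw⟩]
    exact Finset.inf'_le _ hw
  set W : ℝ := 1 + ∑ w ∈ G, n2 w with hWdef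
  have hWpos : 0 < W := by
    rw [hWdef]
    have : 0 ≤ ∑ w ∈ G, n2 w := Finset.sum_nonneg (fun w _ => n2_nonneg w)
    linarith
  have hWle : ∀ w ∈ O, n2 w ≤ W := by
    intro w hw
    rw [hO, Finset.mem_filter] at hw
    have := Finset.single_le_sum (f := fun w => n2 w) (fun v _ => n2_nonneg v) hw.1
    rw [hWdef]; linarith
  set M : ℝ := ∑ i, ∑ j, |Q i j| with hMdef
  have hMnn : 0 ≤ M :=
    Finset.sum_nonneg (fun i _ => Finset.sum_nonneg (fun j _ => abs_nonneg _))
  set Mg : ℝ := ∑ i, |g i| with hMgdef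
  have hMgnn : 0 ≤ Mg := Finset.sum_nonneg (fun i _ => abs_nonneg _)
  set κ : ℝ := W / μ with hκdef
  have hκnn : 0 ≤ κ := le_of_lt (div_pos hWpos hμpos)
  refine ⟨M * κ * (2 + 3 * κ * Mg), by positivity, ?_⟩
  intro u hu
  have hgu : 0 ≤ dotp g u := hg u hu
  obtain ⟨lam, hnn, hrep⟩ := (hG u).1 hu
  set cz := ∑ w ∈ G.filter (fun w => dotp g w = 0), lam w • w with hcz
  set r := ∑ w ∈ O, lam w • w with hr
  have hsplit : u = cz + r := by
    rw [hrep, hcz, hr, hO]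
    exact (Finset.sum_filter_add_sum_filter_not G _ _).symm
  -- cz is in the cone and in g-perp
  have hczK : ∀ a ∈ L, 0 ≤ dotp a cz := by
    intro a ha
    rw [hcz, dotp_conesum]
    apply Finset.sum_nonneg
    intro w hw
    rw [Finset.mem_filter] at hw
    exact mul_nonneg (hnn w) (hW w hw.1 a ha)
  have hgcz : dotp g cz = 0 := by
    rw [hcz, dotp_conesum]
    apply Finset.sum_eq_zero
    intro w hw
    rw [Finset.mem_filter] at hw
    rw [hw.2, mul_zero]
  have hqcz : 0 ≤ qf Q cz := hcop cz hczK hgcz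
  have hgur : dotp g u = dotp g r := by
    rw [hsplit, dotp_add_right, hgcz, zero_add]
  -- bound on the sum of coefficients over O
  set S : ℝ := ∑ w ∈ O, lam w with hS
  have hSnn : 0 ≤ S := Finset.sum_nonneg (fun w _ => hnn w)
  have hμS : μ * S ≤ dotp g u := by
    rw [hgur, hr, dotp_conesum, hS, Finset.mul_sum]
    apply Finset.sum_le_sum
    intro w hw
    rw [mul_comm]
    exact mul_le_mul_of_nonneg_left (hμle w hw) (hnn w)
  -- bound on ‖r‖
  have hn2r : n2 r ≤ κ * dotp g u := by
    have h1 : n2 r ≤ W * S := by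
      calc n2 r ≤ ∑ w ∈ O, n2 (lam w • w) := n2_sum_le O _
        _ = ∑ w ∈ O, lam w * n2 w := by
            apply Finset.sum_congr rfl; intro w _
            rw [n2_smul, abs_of_nonneg (hnn w)]
        _ ≤ ∑ w ∈ O, lam w * W := by
            apply Finset.sum_le_sum; intro w hw
            exact mul_le_mul_of_nonneg_left (hWle w hw) (hnn w)
        _ = W * S := by
            rw [hS, Finset.mul_sum]
            exact Finset.sum_congr rfl (fun w _ => mul_comm _ _)
    have h2 : W * S ≤ κ * dotp g u := by
      rw [hκdef, div_mul_eq_mul_div, le_div_iff₀ hμpos]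
      calc W * S * μ = W * (μ * S) := by ring
        _ ≤ W * dotp g u := mul_le_mul_of_nonneg_left hμS (le_of_lt hWpos)
    linarith
  have hn2cz : n2 cz ≤ n2 u + n2 r := by
    have : cz = u - r := by rw [hsplit]; abel
    rw [this]
    exact n2_sub_le u r
  -- expansion
  have hexp : qf Q u = qf Q cz + bil Q cz r + bil Q r cz + qf Q r := by
    rw [hsplit]; exact qf_expand Q cz r
  have hb1 : -(M * n2 cz * n2 r) ≤ bil Q cz r := by
    have := abs_bil_le Q cz r
    have := neg_abs_le (bil Q cz r)
    rw [← hMdef] at *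
    linarith
  have hb2 : -(M * n2 r * n2 cz) ≤ bil Q r cz := by
    have := abs_bil_le Q r cz
    have := neg_abs_le (bil Q r cz)
    rw [← hMdef] at *
    linarith
  have hb3 : -(M * n2 r * n2 r) ≤ qf Q r := by
    have h1 : qf Q r = bil Q r r := rfl
    have := abs_bil_le Q r r
    have := neg_abs_le (bil Q r r)
    rw [← hMdef] at *
    linarith
  have hgMg : dotp g u ≤ Mg * n2 u := by
    have h1 := abs_dotp_le g u
    have h2 := le_abs_self (dotp g u)
    rw [← hMgdef] at h1
    linarith
  -- final assembly
  have hA : 2 * n2 cz + n2 r ≤ (2 + 3 * κ * Mg) * n2 u := by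
    have h3 : 3 * (n2 r) ≤ 3 * (κ * dotp g u) := by linarith
    have h4 : 3 * κ * dotp g u ≤ 3 * κ * (Mg * n2 u) :=
      mul_le_mul_of_nonneg_left hgMg (by positivity)
    nlinarith [n2_nonneg u, n2_nonneg r]
  have hC : (2 * n2 cz + n2 r) * n2 r ≤ ((2 + 3 * κ * Mg) * n2 u) * (κ * dotp g u) := by
    apply mul_le_mul hA hn2r (n2_nonneg r)
    exact mul_nonneg (by positivity) (n2_nonneg u)
  have hMC : M * ((2 * n2 cz + n2 r) * n2 r) ≤
      M * (((2 + 3 * κ * Mg) * n2 u) * (κ * dotp g u)) :=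
    mul_le_mul_of_nonneg_left hC hMnn
  have hγeq : M * κ * (2 + 3 * κ * Mg) * dotp g u * n2 u =
      M * (((2 + 3 * κ * Mg) * n2 u) * (κ * dotp g u)) := by ring
  rw [hγeq]
  have hfin : -(M * ((2 * n2 cz + n2 r) * n2 r)) ≤ qf Q u := by
    nlinarith [hb1, hb2, hb3, hqcz, hexp]
  linarith


lemma dotp_sub_right (a u v : Fin n → ℝ) : dotp a (u - v) = dotp a u - dotp a v := by
  simp [dotp, mul_sub, Finset.sum_sub_distrib]

lemma qf_smul (Q : Matrix (Fin n) (Fin n) ℝ) (t : ℝ) (v : Fin n → ℝ) :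
    qf Q (t • v) = t^2 * qf Q v := by
  simp only [qf, Pi.smul_apply, smul_eq_mul, Finset.mul_sum]
  apply Finset.sum_congr rfl; intro i _
  apply Finset.sum_congr rfl; intro j _
  ring

section Poly

variable {n m : ℕ} (A : Matrix (Fin m) (Fin n) ℝ) (b : Fin m → ℝ) (xbar : Fin n → ℝ)

/-- Moving from `xbar` along a direction in the active cone stays in the polyhedron
for small steps. -/
lemma ray (hxbar : ∀ i, b i ≤ ∑ j, A i j * xbar j) (u : Fin n → ℝ)
    (hu : ∀ i, (∑ j, A i j * xbar j = b i) → 0 ≤ ∑ j, A i j * u j) :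
    ∃ t0 : ℝ, 0 < t0 ∧ ∀ t, 0 ≤ t → t ≤ t0 →
      ∀ i, b i ≤ ∑ j, A i j * (xbar + t • u) j := by
  classical
  set f : Fin m → ℝ := fun i => if (∑ j, A i j * xbar j = b i) then 1
    else ((∑ j, A i j * xbar j) - b i) / (1 + |∑ j, A i j * u j|) with hf
  have hfpos : ∀ i, 0 < f i := by
    intro i; rw [hf]; dsimp only
    split_ifs with h
    · norm_num
    · apply div_pos
      · have h1 := hxbar i
        have h2 : b i < ∑ j, A i j * xbar j := lt_of_le_of_ne h1 (fun e => h e.symm)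
        linarith
      · positivity
  set t0 : ℝ := if hm : (Finset.univ : Finset (Fin m)).Nonempty
    then Finset.univ.inf' hm f else 1 with ht0
  refine ⟨t0, ?_, ?_⟩
  · rw [ht0]; split_ifs with hm
    · rw [Finset.lt_inf'_iff]; intro i _; exact hfpos i
    · norm_num
  · intro t htnn hle i
    have hexp : ∑ j, A i j * (xbar + t • u) j
        = (∑ j, A i j * xbar j) + t * ∑ j, A i j * u j := by
      simp only [Pi.add_apply, Pi.smul_apply, smul_eq_mul, mul_add,
        Finset.sum_add_distrib, Finset.mul_sum]
      congr 1
      apply Finset.sum_congr rfl; intro j _; ring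
    rw [hexp]
    have htf : t ≤ f i := by
      rw [ht0, dif_pos ⟨i, Finset.mem_univ i⟩] at hle
      exact le_trans hle (Finset.inf'_le f (Finset.mem_univ i))
    by_cases hact : (∑ j, A i j * xbar j = b i)
    · rw [hact]
      have := hu i hact
      nlinarith
    · have hs : 0 < (∑ j, A i j * xbar j) - b i := by
        have h2 : b i < ∑ j, A i j * xbar j := lt_of_le_of_ne (hxbar i) (fun e => hact e.symm)
        linarith
      have hfi : f i = ((∑ j, A i j * xbar j) - b i) / (1 + |∑ j, A i j * u j|) := by
        rw [hf]; dsimp only; rw [if_neg hact]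
      rw [hfi] at htf
      set d := ∑ j, A i j * u j with hd
      have hden : (0:ℝ) < 1 + |d| := by positivity
      have h2 : t * (1 + |d|) ≤ (∑ j, A i j * xbar j) - b i := by
        rw [← le_div_iff₀ hden]; exact htf
      have h3 : -(t * |d|) ≤ t * d := by nlinarith [neg_abs_le d, abs_nonneg d]
      nlinarith [abs_nonneg d]

/-- Feasible differences lie in the active cone. -/
lemma sub_mem_K (y : Fin n → ℝ) (hy : ∀ i, b i ≤ ∑ j, A i j * y j) :
    ∀ i, (∑ j, A i j * xbar j = b i) → 0 ≤ ∑ j, A i j * (y - xbar) j := by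
  intro i hact
  have hexp : ∑ j, A i j * (y - xbar) j
      = (∑ j, A i j * y j) - ∑ j, A i j * xbar j := by
    simp [Pi.sub_apply, mul_sub, Finset.sum_sub_distrib]
  rw [hexp, hact]
  have := hy i
  linarith

/-- Tangent vectors lie in the active cone. -/
lemma tangent_mem_K (v : Fin n → ℝ)
    (hv : v ∈ TangentCone {x : Fin n → ℝ | ∀ i, b i ≤ ∑ j, A i j * x j} xbar) :
    ∀ i, (∑ j, A i j * xbar j = b i) → 0 ≤ ∑ j, A i j * v j := by
  obtain ⟨xs, τ, hxsP, _, hτpos, _, hvlim⟩ := hv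
  intro i hact
  set a : Fin n → ℝ := fun j => A i j with ha
  have hcont : Continuous (fun w : Fin n → ℝ => dotp a w) := by
    apply continuous_finset_sum
    intro j _
    exact continuous_const.mul (continuous_apply j)
  have htends : Tendsto (fun k => dotp a ((τ k)⁻¹ • (xs k - xbar))) atTop (𝓝 (dotp a v)) :=
    (hcont.tendsto v).comp hvlim
  have hnn : ∀ k, 0 ≤ dotp a ((τ k)⁻¹ • (xs k - xbar)) := by
    intro k
    rw [dotp_smul_right, dotp_sub_right]
    have h1 : b i ≤ dotp a (xs k) := hxsP k i
    have h2 : dotp a xbar = b i := hact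
    have h3 : 0 ≤ (τ k)⁻¹ := le_of_lt (inv_pos.2 (hτpos k))
    apply mul_nonneg h3
    rw [h2]
    linarith
  exact ge_of_tendsto htends (Filter.Eventually.of_forall hnn)

/-- The active cone is contained in the tangent cone. -/
lemma K_mem_tangent (hxbar : ∀ i, b i ≤ ∑ j, A i j * xbar j) (v : Fin n → ℝ)
    (hv : ∀ i, (∑ j, A i j * xbar j = b i) → 0 ≤ ∑ j, A i j * v j) :
    v ∈ TangentCone {x : Fin n → ℝ | ∀ i, b i ≤ ∑ j, A i j * x j} xbar := by
  obtain ⟨t0, ht0, hray⟩ := ray A b xbar hxbar v hv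
  have hτpos : ∀ k : ℕ, 0 < t0 / ((k:ℝ)+1) := by
    intro k; apply div_pos ht0; positivity
  have hτlim : Tendsto (fun k : ℕ => t0 / ((k:ℝ)+1)) atTop (𝓝 0) := by
    have h2 := tendsto_one_div_add_atTop_nhds_zero_nat.const_mul t0
    rw [mul_zero] at h2
    have : (fun k : ℕ => t0 / ((k:ℝ)+1)) = fun k : ℕ => t0 * (1/((k:ℝ)+1)) := by
      funext k; rw [mul_one_div]
    rw [this]
    exact h2
  refine ⟨fun k => xbar + (t0/((k:ℝ)+1)) • v, fun k => t0/((k:ℝ)+1), ?_, ?_, hτpos, hτlim, ?_⟩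
  · intro k
    apply hray _ (hτpos k).le
    apply div_le_self ht0.le
    have : (0:ℝ) ≤ (k:ℝ) := Nat.cast_nonneg k
    linarith
  · have h1 : Tendsto (fun k : ℕ => (t0/((k:ℝ)+1)) • v) atTop (𝓝 ((0:ℝ) • v)) :=
      hτlim.smul_const v
    rw [zero_smul] at h1
    have h2 := h1.const_add xbar
    rw [add_zero] at h2
    exact h2
  · have heq : (fun k : ℕ => (t0/((k:ℝ)+1))⁻¹ • ((xbar + (t0/((k:ℝ)+1)) • v) - xbar))
        = fun _ => v := by
      funext k
      rw [add_sub_cancel_left, smul_smul, inv_mul_cancel₀ (ne_of_gt (hτpos k)), one_smul]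
    rw [heq]
    exact tendsto_const_nhds

end Poly

end QPaux

open QPaux

/-- For a quadratic program `min_{x ∈ P} q(x)` over a polyhedron
`P = {x : Ax ≥ b}`, a feasible point `xbar` is a local minimizer iff it is a stationary point
and `Q` is copositive on the critical cone `C(xbar;q;P) = T(xbar;P) ∩ ∇q(xbar)^⊥`. -/
theorem stmt2 {n m : ℕ} (Q : Matrix (Fin n) (Fin n) ℝ) (hQ : ∀ i j, Q i j = Q j i)
    (c : Fin n → ℝ) (α : ℝ) (A : Matrix (Fin m) (Fin n) ℝ) (b : Fin m → ℝ)
    (P : Set (Fin n → ℝ)) (hP : P = {x | ∀ i, b i ≤ ∑ j, A i j * x j})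
    (xbar : Fin n → ℝ) (hxbar : xbar ∈ P) :
    IsLocMin' (quadF Q c α) P xbar ↔
      ((∀ y ∈ P, 0 ≤ ∑ i, gradQ Q c xbar i * (y i - xbar i)) ∧
       (∀ v ∈ TangentCone P xbar, (∑ i, gradQ Q c xbar i * v i) = 0 →
          0 ≤ ∑ i, ∑ j, Q i j * v i * v j)) := by
  subst hP
  have hxbarP : ∀ i, b i ≤ ∑ j, A i j * xbar j := hxbar
  set g : Fin n → ℝ := gradQ Q c xbar with hgdef
  constructor
  · rintro ⟨hxP, ε, hε, hmin⟩
    constructor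
    · -- stationarity
      intro y hy
      show (0:ℝ) ≤ dotp g (y - xbar)
      set d : Fin n → ℝ := y - xbar with hd
      have hKd : ∀ i, (∑ j, A i j * xbar j = b i) → 0 ≤ ∑ j, A i j * d j :=
        sub_mem_K A b xbar y hy
      obtain ⟨t0, ht0, hray⟩ := ray A b xbar hxbarP d hKd
      by_contra hneg
      push_neg at hneg
      have hn2d : 0 ≤ n2 d := n2_nonneg d
      set t : ℝ := min t0 (min (ε/(n2 d + 1)) ((-(dotp g d))/(|qf Q d| + 1))) with ht
      have htpos : 0 < t := by
        apply lt_min ht0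
        apply lt_min
        · positivity
        · apply div_pos (by linarith) (by positivity)
      have hyP : (xbar + t • d) ∈ {x : Fin n → ℝ | ∀ i, b i ≤ ∑ j, A i j * x j} :=
        hray t htpos.le (min_le_left _ _)
      have hclose : n2 ((xbar + t • d) - xbar) < ε := by
        rw [add_sub_cancel_left, n2_smul, abs_of_pos htpos]
        have h1 : t ≤ ε/(n2 d + 1) := le_trans (min_le_right _ _) (min_le_left _ _)
        have h2 : t * (n2 d + 1) ≤ ε := by
          rw [← le_div_iff₀ (by positivity : (0:ℝ) < n2 d + 1)]
          exact h1
        nlinarith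
      have hle := hmin _ hyP hclose
      rw [quad_expand Q hQ c α xbar (t • d), dotp_smul_right, qf_smul] at hle
      have h3 : t ≤ (-(dotp g d))/(|qf Q d| + 1) := le_trans (min_le_right _ _) (min_le_right _ _)
      have h4 : t * (|qf Q d| + 1) ≤ -(dotp g d) := by
        rw [← le_div_iff₀ (by positivity : (0:ℝ) < |qf Q d| + 1)]
        exact h3
      nlinarith [le_abs_self (qf Q d), htpos, abs_nonneg (qf Q d)]
    · -- copositivity on the critical cone
      intro v hv hgv
      show (0:ℝ) ≤ qf Q v
      have hKv : ∀ i, (∑ j, A i j * xbar j = b i) → 0 ≤ ∑ j, A i j * v j :=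
        tangent_mem_K A b xbar v hv
      obtain ⟨t0, ht0, hray⟩ := ray A b xbar hxbarP v hKv
      have hn2v : 0 ≤ n2 v := n2_nonneg v
      set t : ℝ := min t0 (ε/(n2 v + 1)) with ht
      have htpos : 0 < t := lt_min ht0 (by positivity)
      have hyP : (xbar + t • v) ∈ {x : Fin n → ℝ | ∀ i, b i ≤ ∑ j, A i j * x j} :=
        hray t htpos.le (min_le_left _ _)
      have hclose : n2 ((xbar + t • v) - xbar) < ε := by
        rw [add_sub_cancel_left, n2_smul, abs_of_pos htpos]
        have h1 : t ≤ ε/(n2 v + 1) := min_le_right _ _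
        have h2 : t * (n2 v + 1) ≤ ε := by
          rw [← le_div_iff₀ (by positivity : (0:ℝ) < n2 v + 1)]
          exact h1
        nlinarith
      have hle := hmin _ hyP hclose
      rw [quad_expand Q hQ c α xbar (t • v), dotp_smul_right, qf_smul] at hle
      have hgv' : dotp g v = 0 := hgv
      rw [hgv', mul_zero] at hle
      nlinarith [mul_pos htpos htpos]
  · rintro ⟨hstat, hcop⟩
    set L : List (Fin n → ℝ) :=
      ((Finset.univ.filter (fun i => ∑ j, A i j * xbar j = b i)).toList).map
        (fun i => fun j => A i j) with hL
    have hbridge : ∀ u : Fin n → ℝ, (∀ a ∈ L, 0 ≤ dotp a u) ↔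
        (∀ i, (∑ j, A i j * xbar j = b i) → 0 ≤ ∑ j, A i j * u j) := by
      intro u
      constructor
      · intro h i hi
        exact h (fun j => A i j) (List.mem_map.2 ⟨i, Finset.mem_toList.2
          (Finset.mem_filter.2 ⟨Finset.mem_univ i, hi⟩), rfl⟩)
      · intro h a ha
        obtain ⟨i, hi, rfl⟩ := List.mem_map.1 ha
        exact h i (Finset.mem_filter.1 (Finset.mem_toList.1 hi)).2
    have hg1 : ∀ u, (∀ a ∈ L, 0 ≤ dotp a u) → 0 ≤ dotp g u := by
      intro u hu
      obtain ⟨t0, ht0, hray⟩ := ray A b xbar hxbarP u ((hbridge u).1 hu)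
      have hyP : (xbar + t0 • u) ∈ {x : Fin n → ℝ | ∀ i, b i ≤ ∑ j, A i j * x j} :=
        hray t0 ht0.le le_rfl
      have hst := hstat _ hyP
      have heq : (∑ i, gradQ Q c xbar i * ((xbar + t0 • u) i - xbar i))
          = dotp g ((xbar + t0 • u) - xbar) := rfl
      rw [heq, add_sub_cancel_left, dotp_smul_right] at hst
      nlinarith [hst, ht0]
    have hg2 : ∀ u, (∀ a ∈ L, 0 ≤ dotp a u) → dotp g u = 0 → 0 ≤ qf Q u := by
      intro u hu h0
      exact hcop u (K_mem_tangent A b xbar hxbarP u ((hbridge u).1 hu)) h0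
    obtain ⟨γ, hγ, hkey⟩ := key_lemma L g Q hg1 hg2
    refine ⟨hxbar, 1/(γ+1), by positivity, ?_⟩
    intro y hy hclose
    set d : Fin n → ℝ := y - xbar with hd
    have hKd : ∀ a ∈ L, 0 ≤ dotp a d := (hbridge d).2 (sub_mem_K A b xbar y hy)
    have hq := hkey d hKd
    have hgd := hg1 d hKd
    have hyeq : y = xbar + d := by rw [hd]; abel
    rw [hyeq, quad_expand Q hQ c α xbar d]
    have hn2d : n2 d < 1/(γ+1) := hclose
    have h1 : n2 d * (γ+1) < 1 := by
      rw [← lt_div_iff₀ (by positivity : (0:ℝ) < γ+1)]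
      exact hn2d
    have hsml : γ * n2 d ≤ 1 := by nlinarith [n2_nonneg d]
    have h2 : γ * dotp g d * n2 d ≤ dotp g d := by
      have := mul_le_mul_of_nonneg_left hsml hgd
      nlinarith
    linarith [hq, h2, hgd]
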